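/- For all real a, b with Δ(a,b) < 0, the polynomial R_{a,b}(p) = p⁴ − 6p² + 1 + (1 − p²)(a + bp) has exactly two real roots, both simple, one in (−∞,−1) and one in (1,+∞). (This is the case of an axiumbilic point of type E₃, at which the Lie-Cartan vector field has three hyperbolic saddles on the projective line.) -/

import Mathlib

/-- Discriminant of the monic quartic `x⁴ + b x³ + c x² + d x + e`. -/
def D4 (b c d e : ℝ) : ℝ :=
  256*e^3 - 192*b*d*e^2 - 128*c^2*e^2 + 144*c*d^2*e - 27*d^4
  + 144*b^2*c*e^2 - 6*b^2*d^2*e - 80*b*c^2*d*e + 18*b*c*d^3 + 16*c^4*e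
  - 4*c^3*d^2 - 27*b^4*e^2 + 18*b^3*c*d*e - 4*b^3*d^3 - 4*b^2*c^3*e + b^2*c^2*d^2

set_option maxHeartbeats 4000000 in
/-- Type `E₃`: when `Δ(a,b) < 0`, the quartic
`R_{a,b}(p) = p⁴ − 6p² + 1 + (1 − p²)(a + bp)` has exactly two real roots,
both simple, one in `(−∞,−1)` and one in `(1,+∞)`. -/
theorem R_two_simple_roots_of_disc_neg (a b : ℝ) (R : ℝ → ℝ) (Δ : ℝ → ℝ → ℝ)
    (hR : R = fun p => p^4 - 6*p^2 + 1 + (1 - p^2)*(a + b*p))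
    (hΔ : Δ = fun a b => 16*a^5 + 4*(b^2 + 68)*a^4 + 16*(b^2 + 144)*a^3
      - 8*(b^2 - 80)*(16 + b^2)*a^2 + 96*(16 + b^2)^2*a + 4*(16 + b^2)^3)
    (hneg : Δ a b < 0) :
    ∃ p₁ p₂ : ℝ, p₁ < -1 ∧ 1 < p₂ ∧
      (∀ p : ℝ, R p = 0 ↔ p = p₁ ∨ p = p₂) ∧
      deriv R p₁ ≠ 0 ∧ deriv R p₂ ≠ 0 := by
  have hcont : Continuous R := by rw [hR]; continuity
  set T : ℝ := 8 + |a| + 2 * |b| with hT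
  have hA : 0 ≤ |a| := abs_nonneg a
  have hB : 0 ≤ |b| := abs_nonneg b
  have hT8 : (8:ℝ) ≤ T := by simp only [hT]; linarith
  have hT0 : (0:ℝ) ≤ T := by linarith
  -- positivity of R at ±T
  have key : ∀ u : ℝ, -(|a| + |b| * T) ≤ u → u ≤ |a| + |b| * T →
      0 < T^4 - 6*T^2 + 1 + (1 - T^2)*u := by
    intro u h1 h2
    simp only [hT] at h1 h2 ⊢
    have hT2 : 1 ≤ (8 + |a| + 2 * |b|)^2 := by nlinarith
    have hM : 0 ≤ ((8 + |a| + 2 * |b|)^2 - 1) *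
        (|a| + |b| * (8 + |a| + 2 * |b|) - u) :=
      mul_nonneg (by linarith) (by linarith)
    nlinarith [hM, hA, hB, mul_nonneg hA hB, mul_nonneg hA hA, mul_nonneg hB hB,
      mul_nonneg (mul_nonneg hA hA) hA, mul_nonneg (mul_nonneg hA hA) hB,
      mul_nonneg (mul_nonneg hA hB) hB, mul_nonneg (mul_nonneg hB hB) hB,
      mul_nonneg (mul_nonneg hA hA) (mul_nonneg hA hA),
      mul_nonneg (mul_nonneg hA hA) (mul_nonneg hA hB),
      mul_nonneg (mul_nonneg hA hA) (mul_nonneg hB hB),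
      mul_nonneg (mul_nonneg hA hB) (mul_nonneg hB hB),
      mul_nonneg (mul_nonneg hB hB) (mul_nonneg hB hB)]
  have habs : ∀ s : ℝ, s = 1 ∨ s = -1 → 0 < R (s*T) := by
    intro s hs
    have h1 : -( |a| + |b| * T) ≤ a + b*(s*T) ∧ a + b*(s*T) ≤ |a| + |b| * T := by
      rcases hs with rfl | rfl
      · constructor <;> nlinarith [le_abs_self a, neg_abs_le a, le_abs_self b,
          neg_abs_le b, mul_le_mul_of_nonneg_right (le_abs_self b) (le_trans (by norm_num) hT8),
          mul_le_mul_of_nonneg_right (neg_abs_le b) (le_trans (by norm_num) hT8)]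
      · constructor <;> nlinarith [le_abs_self a, neg_abs_le a, le_abs_self b,
          neg_abs_le b, mul_le_mul_of_nonneg_right (le_abs_self b) (le_trans (by norm_num) hT8),
          mul_le_mul_of_nonneg_right (neg_abs_le b) (le_trans (by norm_num) hT8)]
    have := key _ h1.1 h1.2
    rw [hR]
    rcases hs with rfl | rfl <;> · simp only; nlinarith [this]
  have hRT : 0 < R T := by have := habs 1 (Or.inl rfl); simpa using this
  have hRmT : 0 < R (-T) := by have := habs (-1) (Or.inr rfl); simpa using this
  have hR1 : R 1 = -4 := by rw [hR]; norm_num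
  have hRm1 : R (-1) = -4 := by rw [hR]; norm_num
  -- roots by IVT
  obtain ⟨p₂, hp₂mem, hp₂root⟩ :
      ∃ p ∈ Set.Ioo (1:ℝ) T, R p = 0 := by
    have h01 : (0:ℝ) ∈ Set.Ioo (R 1) (R T) := by rw [hR1]; exact ⟨by norm_num, hRT⟩
    have := intermediate_value_Ioo (by linarith : (1:ℝ) ≤ T) hcont.continuousOn h01
    obtain ⟨p, hp, hv⟩ := this
    exact ⟨p, hp, hv⟩
  obtain ⟨p₁, hp₁mem, hp₁root⟩ :
      ∃ p ∈ Set.Ioo (-T) (-1:ℝ), R p = 0 := by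
    have h01 : (0:ℝ) ∈ Set.Ioo (R (-1)) (R (-T)) := by rw [hRm1]; exact ⟨by norm_num, hRmT⟩
    have := intermediate_value_Ioo' (by linarith : (-T:ℝ) ≤ -1) hcont.continuousOn h01
    obtain ⟨p, hp, hv⟩ := this
    exact ⟨p, hp, hv⟩
  have hp₁lt : p₁ < -1 := hp₁mem.2
  have hp₂gt : 1 < p₂ := hp₂mem.1
  have hp₁ne : p₁ ≠ 0 := by linarith [hp₁lt]
  have hp₂ne : p₂ ≠ 0 := by linarith [hp₂gt]
  have hp₁₂ : p₁ < p₂ := by linarith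
  have hRe₁ : p₁^4 - 6*p₁^2 + 1 + (1 - p₁^2)*(a + b*p₁) = 0 := by
    have := hp₁root; rw [hR] at this; simpa using this
  have hRe₂ : p₂^4 - 6*p₂^2 + 1 + (1 - p₂^2)*(a + b*p₂) = 0 := by
    have := hp₂root; rw [hR] at this; simpa using this
  -- the quadratic cofactor
  obtain ⟨c, hc⟩ : ∃ c : ℝ, c = p₁ + p₂ - b := ⟨_, rfl⟩
  obtain ⟨d, hd⟩ : ∃ d : ℝ, p₁*p₂*d = 1 + a := by
    refine ⟨(1+a)/(p₁*p₂), ?_⟩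
    field_simp
  obtain ⟨U, hUdef⟩ : ∃ U : ℝ, U = -(6+a) - (d + p₁*p₂ - c*(p₁+p₂)) := ⟨_, rfl⟩
  obtain ⟨V, hVdef⟩ : ∃ V : ℝ, V = b - (c*(p₁*p₂) - (p₁+p₂)*d) := ⟨_, rfl⟩
  have e1 : U*p₁^2 + V*p₁ = 0 := by
    linear_combination hRe₁ + p₁^3*hc + hd + p₁^2*hUdef + p₁*hVdef
  have e2 : U*p₂^2 + V*p₂ = 0 := by
    linear_combination hRe₂ + p₂^3*hc + hd + p₂^2*hUdef + p₂*hVdef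
  have l1 : U*p₁ + V = 0 := by
    have h : p₁ * (U*p₁ + V) = 0 := by linear_combination e1
    rcases mul_eq_zero.mp h with h' | h'
    · exact absurd h' hp₁ne
    · exact h'
  have l2 : U*p₂ + V = 0 := by
    have h : p₂ * (U*p₂ + V) = 0 := by linear_combination e2
    rcases mul_eq_zero.mp h with h' | h'
    · exact absurd h' hp₂ne
    · exact h'
  have hU0 : U = 0 := by
    have h : U * (p₁ - p₂) = 0 := by linear_combination l1 - l2
    rcases mul_eq_zero.mp h with h' | h'
    · exact h'
    · exact absurd h' (sub_ne_zero.mpr (ne_of_lt hp₁₂))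
  have hV0 : V = 0 := by linear_combination l1 - p₁*hU0
  -- factorization of R
  have G : ∀ p : ℝ, R p = (p - p₁) * (p - p₂) * (p^2 + c*p + d) := by
    intro p
    rw [hR]
    simp only
    linear_combination p^2*hU0 - p^2*hUdef + p*hV0 - p*hVdef + (-(p^3))*hc + (-1:ℝ)*hd
  -- discriminant identity
  have i1 : Δ a b = D4 (-b) (-(6+a)) b (1+a) := by
    simp only [hΔ, D4]; ring
  have e1' : (-b : ℝ) = c - (p₁+p₂) := by linear_combination -hc
  have e2' : (-(6+a) : ℝ) = d + p₁*p₂ - c*(p₁+p₂) := by linear_combination hU0 - hUdef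
  have e3' : (b : ℝ) = c*(p₁*p₂) - (p₁+p₂)*d := by linear_combination hV0 - hVdef
  have e4' : (1+a : ℝ) = p₁*p₂*d := hd.symm
  have i3 : D4 (-b) (-(6+a)) b (1+a)
      = D4 (c - (p₁+p₂)) (d + p₁*p₂ - c*(p₁+p₂)) (c*(p₁*p₂) - (p₁+p₂)*d) (p₁*p₂*d) := by
    rw [e1', e2', e3', e4']
  have i2 : D4 (c - (p₁+p₂)) (d + p₁*p₂ - c*(p₁+p₂)) (c*(p₁*p₂) - (p₁+p₂)*d) (p₁*p₂*d)
      = ((p₁+p₂)^2 - 4*(p₁*p₂)) * (c^2 - 4*d) *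
        (d^2 - 2*(p₁*p₂)*d + (p₁*p₂)*c^2 + (p₁*p₂)^2 + (p₁+p₂)*c*d
          + (p₁+p₂)*(p₁*p₂)*c + (p₁+p₂)^2*d)^2 := by
    simp only [D4]; ring
  have hkey : Δ a b = ((p₁+p₂)^2 - 4*(p₁*p₂)) * (c^2 - 4*d) *
      (d^2 - 2*(p₁*p₂)*d + (p₁*p₂)*c^2 + (p₁*p₂)^2 + (p₁+p₂)*c*d
        + (p₁+p₂)*(p₁*p₂)*c + (p₁+p₂)^2*d)^2 := by
    rw [i1, i3, i2]
  have hS : 0 < (p₁+p₂)^2 - 4*(p₁*p₂) := by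
    have h : (p₁+p₂)^2 - 4*(p₁*p₂) = (p₂-p₁)^2 := by ring
    rw [h]; exact pow_pos (by linarith) 2
  have hcd : c^2 - 4*d < 0 := by
    by_contra h
    push_neg at h
    have h2 : 0 ≤ ((p₁+p₂)^2 - 4*(p₁*p₂)) * (c^2 - 4*d) *
        (d^2 - 2*(p₁*p₂)*d + (p₁*p₂)*c^2 + (p₁*p₂)^2 + (p₁+p₂)*c*d
          + (p₁+p₂)*(p₁*p₂)*c + (p₁+p₂)^2*d)^2 :=
      mul_nonneg (mul_nonneg hS.le h) (sq_nonneg _)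
    rw [hkey] at hneg
    exact absurd hneg (not_lt.mpr h2)
  have hquad : ∀ p : ℝ, 0 < p^2 + c*p + d := by
    intro p
    nlinarith [sq_nonneg (2*p + c)]
  refine ⟨p₁, p₂, hp₁lt, hp₂gt, ?_, ?_, ?_⟩
  · intro p
    rw [G p]
    constructor
    · intro h
      rcases mul_eq_zero.mp h with h' | h'
      · rcases mul_eq_zero.mp h' with h'' | h''
        · exact Or.inl (sub_eq_zero.mp h'')
        · exact Or.inr (sub_eq_zero.mp h'')
      · exact absurd h' (ne_of_gt (hquad p))
    · rintro (rfl | rfl) <;> ring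
  · -- deriv at p₁
    have hfun : R = fun x : ℝ => (x - p₁) * (x - p₂) * (x^2 + c*x + d) := funext G
    have hder : HasDerivAt R ((p₁ - p₂) * (p₁^2 + c*p₁ + d)) p₁ := by
      rw [hfun]
      have h := (((hasDerivAt_id p₁).sub_const p₁).mul
          ((hasDerivAt_id p₁).sub_const p₂)).mul
          (((hasDerivAt_pow 2 p₁).add ((hasDerivAt_id p₁).const_mul c)).add_const d)
      refine h.congr_deriv ?_
      simp only [id_eq, Pi.add_apply, Pi.mul_apply, Nat.cast_ofNat, pow_one]
      ring
    have hv : (p₁ - p₂) * (p₁^2 + c*p₁ + d) < 0 :=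
      mul_neg_of_neg_of_pos (by linarith) (hquad p₁)
    rw [hder.deriv]
    exact ne_of_lt hv
  · -- deriv at p₂
    have hfun : R = fun x : ℝ => (x - p₁) * (x - p₂) * (x^2 + c*x + d) := funext G
    have hder : HasDerivAt R ((p₂ - p₁) * (p₂^2 + c*p₂ + d)) p₂ := by
      rw [hfun]
      have h := (((hasDerivAt_id p₂).sub_const p₁).mul
          ((hasDerivAt_id p₂).sub_const p₂)).mul
          (((hasDerivAt_pow 2 p₂).add ((hasDerivAt_id p₂).const_mul c)).add_const d)
      refine h.congr_deriv ?_
      simp only [id_eq, Pi.add_apply, Pi.mul_apply, Nat.cast_ofNat, pow_one]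
      ring
    have hv : 0 < (p₂ - p₁) * (p₂^2 + c*p₂ + d) :=
      mul_pos (by linarith) (hquad p₂)
    rw [hder.deriv]
    exact ne_of_gt hv
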